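/- arXiv:2302.05520 — 2 statements merged into one kernel-verified Lean document; each statement's English description precedes it below -/
import Mathlib

section
/- Let n, t be naturals with 3t < n, let C ⊆ Fin n with |C| ≤ t be the senders corrupted in the second round, and let m : Fin n → Fin n → Option Bool give the bit that sender i delivers to receiver j (m i j = none means ⊥ or nothing). Assume: (a) every uncorrupted sender i ∉ C sends the same message to all receivers (∀ j j', m i j = m i j'); (b) every uncorrupted sender sends either 0 or ⊥, never 1 (∀ i ∉ C, ∀ j, m i j ≠ some true). If for some receiver j₀ the set {i : m i j₀ = some false} has cardinality > 2n/3, then for every receiver j, |{i : m i j = some false}| > |{i : m i j = some true}|. -/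
theorem graded_consensus_majority (n t : ℕ) (hnt : 3 * t < n)
    (C : Finset (Fin n)) (hC : C.card ≤ t)
    (m : Fin n → Fin n → Option Bool)
    (hsame : ∀ i ∉ C, ∀ j j' : Fin n, m i j = m i j')
    (hno1 : ∀ i ∉ C, ∀ j : Fin n, m i j ≠ some true)
    (j₀ : Fin n)
    (hj₀ : 3 * (Finset.univ.filter (fun i => m i j₀ = some false)).card > 2 * n) :
    ∀ j : Fin n,
      (Finset.univ.filter (fun i => m i j = some false)).card >
      (Finset.univ.filter (fun i => m i j = some true)).card := by
  intro j
  set F0 := Finset.univ.filter (fun i => m i j₀ = some false) with hF0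
  set Fj := Finset.univ.filter (fun i => m i j = some false) with hFj
  set Tj := Finset.univ.filter (fun i => m i j = some true) with hTj
  have hTsub : Tj ⊆ C := by
    intro i hi
    simp only [hTj, Finset.mem_filter] at hi
    by_contra hiC
    exact hno1 i hiC j hi.2
  have hT : Tj.card ≤ t := le_trans (Finset.card_le_card hTsub) hC
  have hsub : F0 \ C ⊆ Fj := by
    intro i hi
    simp only [Finset.mem_sdiff, hF0, Finset.mem_filter] at hi
    simp only [hFj, Finset.mem_filter, Finset.mem_univ, true_and]
    rw [hsame i hi.2 j j₀]
    exact hi.1.2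
  have h1 : F0.card - C.card ≤ Fj.card :=
    le_trans (Finset.le_card_sdiff C F0) (Finset.card_le_card hsub)
  have hFn : F0.card ≤ n := le_trans (Finset.card_filter_le _ _) (by simp)
  omega
end

section
/- Let n, t be naturals with 2t < n, let C ⊆ Fin n with |C| ≤ t (processors corrupted in the second round), and let b, b' be values. Suppose I, I' ⊆ Fin n with |I| ≥ n - t and |I'| ≥ n - t, and f : Fin n → Option V is a function such that: every i ∈ I \ C satisfies f(i) = some b; every i ∉ I with i ∉ C satisfies f(i) = none; every i ∈ I' \ C satisfies f(i) = some b'; and every i ∉ I' with i ∉ C satisfies f(i) = none. Then b = b'. -/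
theorem madabsm_agreement {V : Type*} (n t : ℕ) (hnt : 2 * t < n)
    (C : Finset (Fin n)) (hC : C.card ≤ t)
    (b b' : V) (I I' : Finset (Fin n))
    (hI : I.card ≥ n - t) (hI' : I'.card ≥ n - t)
    (f : Fin n → Option V)
    (h1 : ∀ i ∈ I \ C, f i = some b)
    (h2 : ∀ i, i ∉ I → i ∉ C → f i = none)
    (h3 : ∀ i ∈ I' \ C, f i = some b')
    (h4 : ∀ i, i ∉ I' → i ∉ C → f i = none) :
    b = b' := by
  have hne : (I \ C).Nonempty := by
    rw [← Finset.card_pos]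
    have := Finset.le_card_sdiff C I
    omega
  obtain ⟨i, hi⟩ := hne
  have hiC : i ∉ C := (Finset.mem_sdiff.mp hi).2
  have hb := h1 i hi
  have hiI' : i ∈ I' := by
    by_contra h
    have := h4 i h hiC
    rw [hb] at this; exact Option.some_ne_none _ this
  have hb' := h3 i (Finset.mem_sdiff.mpr ⟨hiI', hiC⟩)
  rw [hb] at hb'
  exact Option.some.inj hb'
end
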